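/- Let 𝓕 be a family of collections of subsets of ℕ such that for each F ∈ 𝓕 there is a function f_F : ℕ → ℕ with: for every x ∈ F, for all but finitely many n, x ∩ [n, f_F(n)) ≠ ∅. Suppose there is a single strictly increasing function f : ℕ → ℕ with f(n) > n for all n which eventually dominates every f_F (i.e. for each F ∈ 𝓕, f_F(n) ≤ f(n) for all but finitely many n). Then there exist x₀, x₁ ⊆ ℕ with x₀ ∪ x₁ = ℕ such that neither x₀ nor x₁ belongs to ⋃𝓕; in particular ⋃𝓕 is not an ultrafilter on ℕ. (One may take x₀ = ⋃_n [f^{2n}(0), f^{2n+1}(0)) and x₁ = ⋃_n [f^{2n+1}(0), f^{2n+2}(0)), where f^k denotes k-fold iteration.) -/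
import Mathlib


/-- Talagrand-style argument: if every `F ∈ 𝓕` comes with a function `fF F` such
that every `x ∈ F` meets `[n, fF F n)` for all but finitely many `n`, and a single
strictly increasing `f` with `f n > n` eventually dominates all the `fF F`, then
the two explicit sets `x₀ = ⋃ₙ [f^{2n}(0), f^{2n+1}(0))` and
`x₁ = ⋃ₙ [f^{2n+1}(0), f^{2n+2}(0))` cover `ℕ` and neither belongs to `⋃𝓕`;
in particular `⋃𝓕` is not an ultrafilter on `ℕ`. -/
theorem union_of_meager_filters_not_ultrafilter
    (𝓕 : Set (Set (Set ℕ))) (fF : Set (Set ℕ) → ℕ → ℕ)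
    (hfF : ∀ F ∈ 𝓕, ∀ x ∈ F, ∀ᶠ n in Filter.atTop, (x ∩ Set.Ico n (fF F n)).Nonempty)
    (f : ℕ → ℕ) (hmono : StrictMono f) (hgt : ∀ n, n < f n)
    (hdom : ∀ F ∈ 𝓕, ∀ᶠ n in Filter.atTop, fF F n ≤ f n) :
    (⋃ n : ℕ, Set.Ico (f^[2 * n] 0) (f^[2 * n + 1] 0)) ∪
      (⋃ n : ℕ, Set.Ico (f^[2 * n + 1] 0) (f^[2 * n + 2] 0)) = Set.univ ∧
    (⋃ n : ℕ, Set.Ico (f^[2 * n] 0) (f^[2 * n + 1] 0)) ∉ ⋃₀ 𝓕 ∧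
    (⋃ n : ℕ, Set.Ico (f^[2 * n + 1] 0) (f^[2 * n + 2] 0)) ∉ ⋃₀ 𝓕 ∧
    ¬ ∃ U : Ultrafilter ℕ, ⋃₀ 𝓕 = {s : Set ℕ | s ∈ U} := by
  have ha_succ : ∀ k, f^[k + 1] 0 = f (f^[k] 0) := fun k =>
    Function.iterate_succ_apply' f k 0
  have ha_mono : StrictMono (fun k => f^[k] 0) := strictMono_nat_of_lt_succ (fun k => by
    simpa [ha_succ k] using hgt (f^[k] 0))
  have ha_le : ∀ k, k ≤ f^[k] 0 := fun k => ha_mono.le_apply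
  -- disjointness of the consecutive intervals
  have hdisj : ∀ k l m : ℕ, k ≠ l → f^[k] 0 ≤ m → m < f^[k + 1] 0 →
      f^[l] 0 ≤ m → m < f^[l + 1] 0 → False := by
    intro k l m hkl h1 h2 h3 h4
    rcases lt_or_gt_of_ne hkl with h | h
    · exact absurd h3 (not_le.2 (h2.trans_le (ha_mono.monotone h)))
    · exact absurd h1 (not_le.2 (h4.trans_le (ha_mono.monotone h)))
  -- main helper: a set avoiding infinitely many intervals is not in ⋃₀ 𝓕
  have hnotmem : ∀ x : Set ℕ,
      (∀ N, ∃ k ≥ N, x ∩ Set.Ico (f^[k] 0) (f^[k + 1] 0) = ∅) → x ∉ ⋃₀ 𝓕 := by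
    intro x hx hmem
    obtain ⟨F, hF, hxF⟩ := hmem
    obtain ⟨N, hN⟩ := Filter.eventually_atTop.1 ((hfF F hF x hxF).and (hdom F hF))
    obtain ⟨k, hk, hk2⟩ := hx N
    obtain ⟨hne, hle⟩ := hN (f^[k] 0) (le_trans hk (ha_le k))
    obtain ⟨m, hmx, hm1, hm2⟩ := hne
    have hm3 : m < f^[k + 1] 0 := by
      rw [ha_succ k]; exact lt_of_lt_of_le hm2 hle
    have : m ∈ x ∩ Set.Ico (f^[k] 0) (f^[k + 1] 0) := ⟨hmx, hm1, hm3⟩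
    rw [hk2] at this
    exact this
  -- the cover
  have hcov : (⋃ n : ℕ, Set.Ico (f^[2 * n] 0) (f^[2 * n + 1] 0)) ∪
      (⋃ n : ℕ, Set.Ico (f^[2 * n + 1] 0) (f^[2 * n + 2] 0)) = Set.univ := by
    ext m
    simp only [Set.mem_univ, iff_true, Set.mem_union, Set.mem_iUnion, Set.mem_Ico]
    have exK : ∃ k, m < f^[k] 0 :=
      ⟨m + 1, lt_of_lt_of_le (Nat.lt_succ_self m) (ha_le (m + 1))⟩
    set K := Nat.find exK with hK
    have hKspec : m < f^[K] 0 := Nat.find_spec exK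
    have hKne : K ≠ 0 := by
      intro h
      rw [h] at hKspec
      exact Nat.not_lt_zero m hKspec
    obtain ⟨j, hj⟩ := Nat.exists_eq_succ_of_ne_zero hKne
    have hjle : f^[j] 0 ≤ m := by
      by_contra h
      exact Nat.find_min exK (by omega : j < K) (not_le.1 h)
    have hjlt : m < f^[j + 1] 0 := by rw [show j + 1 = K from hj.symm]; exact hKspec
    rcases Nat.even_or_odd j with ⟨n, hn⟩ | ⟨n, hn⟩
    · left; exact ⟨n, by rw [show 2 * n = j by omega]; exact hjle,
        by rw [show 2 * n + 1 = j + 1 by omega]; exact hjlt⟩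
    · right; exact ⟨n, by rw [show 2 * n + 1 = j by omega]; exact hjle,
        by rw [show 2 * n + 2 = j + 1 by omega]; exact hjlt⟩
  have h0 : (⋃ n : ℕ, Set.Ico (f^[2 * n] 0) (f^[2 * n + 1] 0)) ∉ ⋃₀ 𝓕 := by
    apply hnotmem
    intro N
    refine ⟨2 * N + 1, by omega, ?_⟩
    ext m
    simp only [Set.mem_inter_iff, Set.mem_iUnion, Set.mem_Ico, Set.mem_empty_iff_false,
      iff_false, not_and]
    rintro ⟨n, h1, h2⟩ h3 h4
    exact hdisj (2 * n) (2 * N + 1) m (by omega) h1 h2 h3 h4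
  have h1 : (⋃ n : ℕ, Set.Ico (f^[2 * n + 1] 0) (f^[2 * n + 2] 0)) ∉ ⋃₀ 𝓕 := by
    apply hnotmem
    intro N
    refine ⟨2 * N, by omega, ?_⟩
    ext m
    simp only [Set.mem_inter_iff, Set.mem_iUnion, Set.mem_Ico, Set.mem_empty_iff_false,
      iff_false, not_and]
    rintro ⟨n, h1, h2⟩ h3 h4
    exact hdisj (2 * n + 1) (2 * N) m (by omega) h1 h2 h3 h4
  refine ⟨hcov, h0, h1, ?_⟩
  rintro ⟨U, hU⟩
  rcases U.mem_or_compl_mem (⋃ n : ℕ, Set.Ico (f^[2 * n] 0) (f^[2 * n + 1] 0)) with h | h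
  · exact h0 (hU ▸ h : _)
  · have hsub : (⋃ n : ℕ, Set.Ico (f^[2 * n] 0) (f^[2 * n + 1] 0))ᶜ ⊆
        ⋃ n : ℕ, Set.Ico (f^[2 * n + 1] 0) (f^[2 * n + 2] 0) := by
      intro m hm
      have : m ∈ (⋃ n : ℕ, Set.Ico (f^[2 * n] 0) (f^[2 * n + 1] 0)) ∪
          ⋃ n : ℕ, Set.Ico (f^[2 * n + 1] 0) (f^[2 * n + 2] 0) := hcov ▸ Set.mem_univ m
      exact this.resolve_left hm
    have : (⋃ n : ℕ, Set.Ico (f^[2 * n + 1] 0) (f^[2 * n + 2] 0)) ∈ U :=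
      Filter.mem_of_superset h hsub
    exact h1 (hU ▸ this : _)
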